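/- In the Euclidean plane, let P_1, P_2, P_3 be the projections onto C_1 = ℝ×{α}, C_2 = ℝ×{β}, and C_3 = {(ξ_1,ξ_2) : ξ_1 > 0, ξ_2 > 0, ξ_1 ξ_2 ≥ γ} with γ > 0. Then for ε ∈ (0,1), the fixed point set of R^ε = (Id+ε(P_3−Id))∘(Id+ε(P_2−Id))∘(Id+ε(P_1−Id)) equals {(ξ_1,ξ_2) ∈ C_3 : ξ_2 = ((1−ε)α + β)/(2−ε)}. -/

import Mathlib

open Filter Topology

noncomputable def mk2 (a b : ℝ) : EuclideanSpace ℝ (Fin 2) :=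
  (WithLp.equiv 2 (Fin 2 → ℝ)).symm ![a, b]

lemma mk2_zero (a b : ℝ) : mk2 a b 0 = a := rfl
lemma mk2_one (a b : ℝ) : mk2 a b 1 = b := rfl

lemma ext2 {x y : EuclideanSpace ℝ (Fin 2)} (h0 : x 0 = y 0) (h1 : x 1 = y 1) : x = y := by
  ext i; fin_cases i <;> assumption

lemma norm_sq2 (v : EuclideanSpace ℝ (Fin 2)) : ‖v‖^2 = v 0^2 + v 1^2 := by
  rw [EuclideanSpace.norm_sq_eq, Fin.sum_univ_two, Real.norm_eq_abs, Real.norm_eq_abs, sq_abs,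
    sq_abs]

lemma inner2 (v w : EuclideanSpace ℝ (Fin 2)) :
    (inner ℝ v w : ℝ) = v 0 * w 0 + v 1 * w 1 := by
  simp [PiLp.inner_apply, RCLike.inner_apply, Fin.sum_univ_two, mul_comm]

lemma proj_line {c : ℝ} {x z : EuclideanSpace ℝ (Fin 2)} (hz : z 1 = c)
    (hmin : ∀ y : EuclideanSpace ℝ (Fin 2), y 1 = c → ‖x - z‖ ≤ ‖x - y‖) : z 0 = x 0 := by
  have h := hmin (mk2 (x 0) c) (mk2_one _ _)
  have h2 := pow_le_pow_left₀ (norm_nonneg _) h 2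
  rw [norm_sq2, norm_sq2] at h2
  simp only [PiLp.sub_apply, mk2_zero, mk2_one, hz, sub_self] at h2
  have h3 : (x 0 - z 0)^2 = 0 := le_antisymm (by nlinarith) (sq_nonneg _)
  have h4 := pow_eq_zero_iff (n := 2) (by norm_num) |>.mp h3
  linarith [sub_eq_zero.mp h4]

lemma conv3' (γ : ℝ) (hγ : 0 < γ) :
    Convex ℝ {p : EuclideanSpace ℝ (Fin 2) | 0 < p 0 ∧ 0 < p 1 ∧ γ ≤ p 0 * p 1} := by
  intro x hx y hy a b ha hb hab
  obtain ⟨hx0, hx1, hxg⟩ := hx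
  obtain ⟨hy0, hy1, hyg⟩ := hy
  have e0 : (a • x + b • y) 0 = a * x 0 + b * y 0 := by
    simp [PiLp.add_apply, PiLp.smul_apply, smul_eq_mul]
  have e1 : (a • x + b • y) 1 = a * x 1 + b * y 1 := by
    simp [PiLp.add_apply, PiLp.smul_apply, smul_eq_mul]
  have key : ∀ s t u v : ℝ, 0 ≤ s → 0 ≤ t → s + t = 1 → 0 < u → 0 < v → 0 < s*u + t*v := by
    intro s t u v hs ht hst hu hv
    rcases hs.lt_or_eq with h | h
    · nlinarith [mul_nonneg ht hv.le]
    · have : t = 1 := by linarith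
      rw [← h, this]; nlinarith
  have hS : 2*γ ≤ x 0 * y 1 + x 1 * y 0 := by
    nlinarith [sq_nonneg (x 0 * y 1 - x 1 * y 0), mul_pos hx0 hy1, mul_pos hx1 hy0,
      mul_le_mul hxg hyg hγ.le (by positivity : (0:ℝ) ≤ x 0 * x 1)]
  refine ⟨?_, ?_, ?_⟩
  · rw [e0]; exact key a b _ _ ha hb hab hx0 hy0
  · rw [e1]; exact key a b _ _ ha hb hab hx1 hy1
  · rw [e0, e1]
    have hab2 : a^2 + 2*(a*b) + b^2 = 1 := by nlinarith [sq_nonneg (a+b)]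
    nlinarith [mul_nonneg ha hb, sq_nonneg a, sq_nonneg b,
      mul_nonneg (mul_nonneg ha ha) (sub_nonneg.mpr hxg),
      mul_nonneg (mul_nonneg hb hb) (sub_nonneg.mpr hyg),
      mul_nonneg (mul_nonneg ha hb) (sub_nonneg.mpr hS)]

set_option maxHeartbeats 1000000 in
theorem stmt11 (α β γ : ℝ) (hγ : 0 < γ)
    (C1 C2 C3 : Set (EuclideanSpace ℝ (Fin 2)))
    (hC1 : C1 = {p | p 1 = α}) (hC2 : C2 = {p | p 1 = β})
    (hC3 : C3 = {p | 0 < p 0 ∧ 0 < p 1 ∧ γ ≤ p 0 * p 1})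
    (P1 P2 P3 : EuclideanSpace ℝ (Fin 2) → EuclideanSpace ℝ (Fin 2))
    (hP1 : ∀ x, P1 x ∈ C1 ∧ ∀ y ∈ C1, ‖x - P1 x‖ ≤ ‖x - y‖)
    (hP2 : ∀ x, P2 x ∈ C2 ∧ ∀ y ∈ C2, ‖x - P2 x‖ ≤ ‖x - y‖)
    (hP3 : ∀ x, P3 x ∈ C3 ∧ ∀ y ∈ C3, ‖x - P3 x‖ ≤ ‖x - y‖) :
    ∀ ε ∈ Set.Ioo (0:ℝ) 1,
      {p | (fun q => q + ε • (P3 q - q))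
            ((fun q => q + ε • (P2 q - q)) ((fun q => q + ε • (P1 q - q)) p)) = p}
        = {p ∈ C3 | p 1 = ((1 - ε) * α + β) / (2 - ε)} := by
  rintro ε ⟨hε0, hε1⟩
  have h2ε : (2 : ℝ) - ε ≠ 0 := by linarith
  have conv3 : Convex ℝ C3 := hC3 ▸ conv3' γ hγ
  have hP1c : ∀ x, P1 x 0 = x 0 ∧ P1 x 1 = α := by
    intro x
    have hm : P1 x 1 = α := by have := (hP1 x).1; rw [hC1] at this; exact this
    exact ⟨proj_line hm (fun y hy => (hP1 x).2 y (by rw [hC1]; exact hy)), hm⟩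
  have hP2c : ∀ x, P2 x 0 = x 0 ∧ P2 x 1 = β := by
    intro x
    have hm : P2 x 1 = β := by have := (hP2 x).1; rw [hC2] at this; exact this
    exact ⟨proj_line hm (fun y hy => (hP2 x).2 y (by rw [hC2]; exact hy)), hm⟩
  ext p
  simp only [Set.mem_setOf_eq, Set.mem_sep_iff]
  set q : EuclideanSpace ℝ (Fin 2) :=
    (fun q => q + ε • (P2 q - q)) ((fun q => q + ε • (P1 q - q)) p) with hqdef
  have hq0 : q 0 = p 0 := by
    simp only [hqdef, PiLp.add_apply, PiLp.smul_apply, PiLp.sub_apply, smul_eq_mul,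
      (hP1c _).1, (hP2c _).1]
    ring
  have hq1 : q 1 = (1-ε)*((1-ε)*(p 1) + ε*α) + ε*β := by
    simp only [hqdef, PiLp.add_apply, PiLp.smul_apply, PiLp.sub_apply, smul_eq_mul,
      (hP1c _).2, (hP2c _).2]
    ring
  constructor
  · intro h
    have h' : q + ε • (P3 q - q) = p := h
    clear h
    clear_value q
    have hu3 : P3 q ∈ C3 := (hP3 q).1
    have hu3' := hu3
    rw [hC3] at hu3'
    obtain ⟨hu0, hu1, hug⟩ := hu3'
    have h0 := congrArg (· 0) h'
    have h1 := congrArg (· 1) h'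
    simp only [PiLp.add_apply, PiLp.smul_apply, PiLp.sub_apply, smul_eq_mul] at h0 h1
    -- h0 : q 0 + ε * (P3 q 0 - q 0) = p 0
    have hu0q : P3 q 0 = q 0 := by
      have hz : ε * (P3 q 0 - q 0) = 0 := by linarith [hq0]
      have := (mul_eq_zero.mp hz).resolve_left hε0.ne'
      linarith
    haveI : Nonempty ↑C3 := ⟨⟨P3 q, hu3⟩⟩
    have hinf : ‖q - P3 q‖ = ⨅ w : C3, ‖q - w‖ :=
      le_antisymm
        (le_ciInf fun w => (hP3 q).2 w w.2)
        (ciInf_le ⟨0, by rintro r ⟨w, rfl⟩; exact norm_nonneg _⟩ (⟨P3 q, hu3⟩ : C3))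
    have hVI := (norm_eq_iInf_iff_real_inner_le_zero conv3 hu3).mp hinf
    have w1mem : mk2 (P3 q 0) (P3 q 1 + 1) ∈ C3 := by
      rw [hC3]
      refine ⟨?_, ?_, ?_⟩ <;> simp only [mk2_zero, mk2_one] <;> nlinarith
    have w2mem : mk2 (2 * P3 q 0) (P3 q 1 / 2) ∈ C3 := by
      rw [hC3]
      refine ⟨?_, ?_, ?_⟩ <;> simp only [mk2_zero, mk2_one] <;> nlinarith
    have hd1 := hVI _ w1mem
    have hd2 := hVI _ w2mem
    rw [inner2] at hd1 hd2
    simp only [PiLp.sub_apply, mk2_zero, mk2_one, hu0q] at hd1 hd2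
    have hqu1 : q 1 = P3 q 1 := by nlinarith
    have hqu : P3 q = q := ext2 hu0q hqu1.symm
    rw [hqu] at h1
    have hp1q : p 1 = q 1 := by linarith
    have hpq : p = q := ext2 hq0.symm hp1q
    have hpC3 : p ∈ C3 := by rw [hpq, ← hqu]; exact hu3
    refine ⟨hpC3, ?_⟩
    have hp : p 1 = (1-ε)*((1-ε)*(p 1) + ε*α) + ε*β := by conv_lhs => rw [hp1q, hq1]
    have h' : ε * ((2-ε)*(p 1) - ((1-ε)*α + β)) = 0 := by linear_combination hp
    have h'' := (mul_eq_zero.mp h').resolve_left hε0.ne'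
    rw [eq_div_iff h2ε]
    linarith
  · rintro ⟨hpC3, hp1⟩
    show q + ε • (P3 q - q) = p
    clear_value q
    have hpC := hpC3
    rw [hC3] at hpC
    obtain ⟨hp0, hp1pos, hpg⟩ := hpC
    have hp1' : p 1 * (2 - ε) = (1 - ε) * α + β := by
      rw [hp1, div_mul_cancel₀ _ h2ε]
    have hqp : q = p := by
      refine ext2 hq0 ?_
      rw [hq1]
      linear_combination (-ε) * hp1'
    have hP3q : P3 q = q := by
      have hle := (hP3 q).2 q (by rw [hqp]; exact hpC3)
      rw [sub_self, norm_zero] at hle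
      have h0' : q - P3 q = 0 := norm_le_zero_iff.mp hle
      exact (sub_eq_zero.mp h0').symm
    rw [hP3q, sub_self, smul_zero, add_zero, hqp]
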